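/- With v_1, v_2, v_3 defined by the recursive Mex algorithm, for every n ≥ 1 the maximum element of D_n equals v_3(n) - v_1(n). -/

import Mathlib

/-- Minimum excluded value of a set of natural numbers. -/
noncomputable def mex (S : Set ℕ) : ℕ := sInf {m : ℕ | m ∉ S}

/-- Coordinates of a set of triples. -/
def coords (G : Set (ℕ × ℕ × ℕ)) : Set ℕ :=
  {k | ∃ x ∈ G, k = x.1 ∨ k = x.2.1 ∨ k = x.2.2}

/-- Pairwise coordinate differences of a set of triples. -/
def diffs (G : Set (ℕ × ℕ × ℕ)) : Set ℕ :=
  {d | ∃ x ∈ G, d = x.2.1 - x.1 ∨ d = x.2.2 - x.2.1 ∨ d = x.2.2 - x.1}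

/-- One step of the Mex algorithm: the next P-position. -/
noncomputable def step (G : Set (ℕ × ℕ × ℕ)) : ℕ × ℕ × ℕ :=
  let F := coords G
  let D := diffs G
  let a := mex F
  let b := mex ((fun d => a + d) '' D ∪ Set.Icc 1 a ∪ F)
  let c := mex ((fun d => b + d) '' D ∪ Set.Icc 1 b ∪ F)
  (a, b, c)

/-- The sets `G_n` of P-positions computed by the Mex algorithm. -/
noncomputable def Gset : ℕ → Set (ℕ × ℕ × ℕ)
  | 0 => {(0, 0, 0)}
  | n + 1 => Gset n ∪ {step (Gset n)}

/-- The `n`-th P-position `(v_1(n), v_2(n), v_3(n))`. -/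
noncomputable def v : ℕ → ℕ × ℕ × ℕ
  | 0 => (0, 0, 0)
  | n + 1 => step (Gset n)

noncomputable def v1 (n : ℕ) : ℕ := (v n).1
noncomputable def v2 (n : ℕ) : ℕ := (v n).2.1
noncomputable def v3 (n : ℕ) : ℕ := (v n).2.2

/-- `F_n`: the set of coordinates of elements of `G_n`. -/
noncomputable def Fset (n : ℕ) : Set ℕ := coords (Gset n)

/-- `D_n`: the set of pairwise coordinate differences over `G_n`. -/
noncomputable def Dset (n : ℕ) : Set ℕ := diffs (Gset n)

lemma mex_notMem {S : Set ℕ} (h : ∃ m, m ∉ S) : mex S ∉ S := Nat.sInf_mem h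

lemma mem_of_lt_mex {S : Set ℕ} {m : ℕ} (h : m < mex S) : m ∈ S := by
  by_contra hm
  have h2 : mex S ≤ m := Nat.sInf_le hm
  omega

lemma mex_le_of_notMem {S : Set ℕ} {m : ℕ} (h : m ∉ S) : mex S ≤ m := Nat.sInf_le h

lemma v1_succ (n : ℕ) : v1 (n+1) = mex (Fset n) := rfl

lemma v2_succ (n : ℕ) : v2 (n+1) =
    mex ((fun d => v1 (n+1) + d) '' Dset n ∪ Set.Icc 1 (v1 (n+1)) ∪ Fset n) := rfl

lemma v3_succ (n : ℕ) : v3 (n+1) =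
    mex ((fun d => v2 (n+1) + d) '' Dset n ∪ Set.Icc 1 (v2 (n+1)) ∪ Fset n) := rfl

lemma v1_zero : v1 0 = 0 := rfl
lemma v2_zero : v2 0 = 0 := rfl
lemma v3_zero : v3 0 = 0 := rfl

lemma mem_Gset {x : ℕ × ℕ × ℕ} {n : ℕ} : x ∈ Gset n ↔ ∃ j, j ≤ n ∧ v j = x := by
  induction n with
  | zero =>
    constructor
    · intro h; exact ⟨0, le_refl 0, by simpa [Gset, v] using h.symm⟩
    · rintro ⟨j, hj, rfl⟩
      interval_cases j
      · simp [Gset, v]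
  | succ n ih =>
    constructor
    · intro h
      rcases h with h | h
      · obtain ⟨j, hj, hv⟩ := ih.mp h
        exact ⟨j, by omega, hv⟩
      · exact ⟨n+1, le_refl _, by simpa [v] using h.symm⟩
    · rintro ⟨j, hj, rfl⟩
      rcases Nat.lt_succ_iff_lt_or_eq.mp (Nat.lt_succ_of_le hj) with h | h
      · exact Or.inl (ih.mpr ⟨j, by omega, rfl⟩)
      · subst h; exact Or.inr (by simp [v, Gset])

lemma mem_Fset {k n : ℕ} : k ∈ Fset n ↔ ∃ j, j ≤ n ∧ (k = v1 j ∨ k = v2 j ∨ k = v3 j) := by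
  constructor
  · rintro ⟨x, hx, hk⟩
    obtain ⟨j, hj, rfl⟩ := mem_Gset.mp hx
    exact ⟨j, hj, hk⟩
  · rintro ⟨j, hj, hk⟩
    exact ⟨v j, mem_Gset.mpr ⟨j, hj, rfl⟩, hk⟩

lemma mem_Dset {d n : ℕ} : d ∈ Dset n ↔
    ∃ j, j ≤ n ∧ (d = v2 j - v1 j ∨ d = v3 j - v2 j ∨ d = v3 j - v1 j) := by
  constructor
  · rintro ⟨x, hx, hk⟩
    obtain ⟨j, hj, rfl⟩ := mem_Gset.mp hx
    exact ⟨j, hj, hk⟩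
  · rintro ⟨j, hj, hk⟩
    exact ⟨v j, mem_Gset.mpr ⟨j, hj, rfl⟩, hk⟩

lemma zero_mem_Fset (n : ℕ) : 0 ∈ Fset n :=
  mem_Fset.mpr ⟨0, Nat.zero_le n, Or.inl rfl⟩

lemma zero_mem_Dset (n : ℕ) : 0 ∈ Dset n :=
  mem_Dset.mpr ⟨0, Nat.zero_le n, Or.inl rfl⟩

lemma Dset_mono {n : ℕ} : Dset n ⊆ Dset (n+1) := by
  intro d hd
  obtain ⟨j, hj, h⟩ := mem_Dset.mp hd
  exact mem_Dset.mpr ⟨j, by omega, h⟩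

lemma Fset_mono {n : ℕ} : Fset n ⊆ Fset (n+1) := by
  intro d hd
  obtain ⟨j, hj, h⟩ := mem_Fset.mp hd
  exact mem_Fset.mpr ⟨j, by omega, h⟩

lemma Fset_zero {x : ℕ} (hx : x ∈ Fset 0) : x = 0 := by
  obtain ⟨j, hj, h⟩ := mem_Fset.mp hx
  interval_cases j
  rcases h with h | h | h <;> simp_all [v1_zero, v2_zero, v3_zero]

lemma Dset_zero {d : ℕ} (hd : d ∈ Dset 0) : d = 0 := by
  obtain ⟨j, hj, h⟩ := mem_Dset.mp hd
  interval_cases j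
  rcases h with h | h | h <;> simp_all [v1_zero, v2_zero, v3_zero]

noncomputable def Kx (n : ℕ) : ℕ := mex (Dset n)

lemma Kx_def (n : ℕ) : Kx n = mex (Dset n) := rfl

def Q (n : ℕ) : Prop :=
  v1 (n+1) + Kx n ≤ v2 (n+1) ∧
  v2 (n+1) ≤ v1 (n+1) + Kx n + 2 ∧
  v3 (n+1) = v2 (n+1) + Kx n ∧
  v2 (n+1) - v1 (n+1) < Kx (n+1) ∧
  IsGreatest (Dset (n+1)) (v3 (n+1) - v1 (n+1)) ∧
  (∀ x ∈ Fset (n+1), x ≤ v3 (n+1)) ∧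
  Kx n < Kx (n+1) ∧
  v1 n < v1 (n+1) ∧
  (∀ d₁ ∈ Dset (n+1), ∀ d₂ ∈ Dset (n+1), Kx (n+1) < d₁ → d₁ < d₂ → d₁ + 2 ≤ d₂)

theorem Qall : ∀ n, Q n := by
  intro n
  induction n using Nat.strong_induction_on with
  | _ n IH =>
  have hD0 : (0:ℕ) ∈ Dset n := zero_mem_Dset n
  have hF0 : (0:ℕ) ∈ Fset n := zero_mem_Fset n
  -- state facts at level n
  have hFle : ∀ x ∈ Fset n, x ≤ v3 n := by
    rcases n with _ | m
    · intro x hx; have := Fset_zero hx; rw [this, v3_zero]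
    · exact (IH m (Nat.lt_succ_self m)).2.2.2.2.2.1
  have hDub : ∀ d ∈ Dset n, d ≤ v3 n - v1 n := by
    rcases n with _ | m
    · intro d hd; have := Dset_zero hd; omega
    · exact fun d hd => ((IH m (Nat.lt_succ_self m)).2.2.2.2.1).2 hd
  have hFne : ∃ x, x ∉ Fset n := ⟨v3 n + 1, fun h => by have := hFle _ h; omega⟩
  have hDne : ∃ x, x ∉ Dset n := ⟨v3 n - v1 n + 1, fun h => by have := hDub _ h; omega⟩
  have hAnin : v1 (n+1) ∉ Fset n := by rw [v1_succ]; exact mex_notMem hFne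
  have hA1 : 1 ≤ v1 (n+1) := by
    rcases Nat.eq_zero_or_pos (v1 (n+1)) with h | h
    · rw [h] at hAnin; exact absurd hF0 hAnin
    · exact h
  have hKnin : Kx n ∉ Dset n := by rw [Kx_def]; exact mex_notMem hDne
  have hK1 : 1 ≤ Kx n := by
    rcases Nat.eq_zero_or_pos (Kx n) with h | h
    · rw [h] at hKnin; exact absurd hD0 hKnin
    · exact h
  have hKlt : ∀ m, m < Kx n → m ∈ Dset n := by
    intro m hm; rw [Kx_def] at hm; exact mem_of_lt_mex hm
  -- monotone chains
  have hKmono : ∀ j, j ≤ n → ∀ i, i ≤ j → Kx i ≤ Kx j := by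
    intro j
    induction j with
    | zero => intro _ i hi; have h0 : i = 0 := Nat.le_zero.mp hi; subst h0; exact le_rfl
    | succ j ihj =>
      intro hj i hi
      by_cases h : i = j + 1
      · subst h; exact le_rfl
      · have h1 : Kx i ≤ Kx j := ihj (by omega) i (by omega)
        have h2 : Kx j < Kx (j+1) := (IH j (by omega)).2.2.2.2.2.2.1
        omega
  have hv1mono : ∀ j, j ≤ n → ∀ i, i ≤ j → v1 i ≤ v1 j := by
    intro j
    induction j with
    | zero => intro _ i hi; have h0 : i = 0 := Nat.le_zero.mp hi; subst h0; exact le_rfl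
    | succ j ihj =>
      intro hj i hi
      by_cases h : i = j + 1
      · subst h; exact le_rfl
      · have h1 : v1 i ≤ v1 j := ihj (by omega) i (by omega)
        have h2 : v1 j < v1 (j+1) := (IH j (by omega)).2.2.2.2.2.2.2.1
        omega
  have hstep3 : ∀ j, j < n → v3 j + 3 ≤ v3 (j+1) := by
    intro j hj
    rcases j with _ | i
    · have q := IH 0 hj
      have h1 : v1 1 + Kx 0 ≤ v2 1 := q.1
      have h3 : v3 1 = v2 1 + Kx 0 := q.2.2.1
      have hne : ∃ x, x ∉ Fset 0 := ⟨1, fun h => by have := Fset_zero h; omega⟩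
      have hnin : v1 1 ∉ Fset 0 := by rw [v1_succ]; exact mex_notMem hne
      have hpos : 1 ≤ v1 1 := by
        rcases Nat.eq_zero_or_pos (v1 1) with h | h
        · rw [h] at hnin; exact absurd (zero_mem_Fset 0) hnin
        · exact h
      have hDne0 : ∃ x, x ∉ Dset 0 := ⟨1, fun h => by have := Dset_zero h; omega⟩
      have hK0 : Kx 0 ∉ Dset 0 := by rw [Kx_def]; exact mex_notMem hDne0
      have hK0p : 1 ≤ Kx 0 := by
        rcases Nat.eq_zero_or_pos (Kx 0) with h | h
        · rw [h] at hK0; exact absurd (zero_mem_Dset 0) hK0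
        · exact h
      have h0 : v3 0 = 0 := v3_zero
      show v3 0 + 3 ≤ v3 1
      omega
    · have qj := IH (i+1) hj
      have qi := IH i (by omega)
      have h1 := qj.1
      have h3 := qj.2.2.1
      have g1 := qi.1
      have g3 := qi.2.2.1
      have g4 := qi.2.2.2.1
      have g7 := qi.2.2.2.2.2.2.1
      have g8 := qj.2.2.2.2.2.2.2.1
      omega
  have hv3mono : ∀ j, j ≤ n → ∀ i, i ≤ j → v3 i ≤ v3 j ∧ (i < j → v3 i + 3 ≤ v3 j) := by
    intro j
    induction j with
    | zero => intro _ i hi; have h0 : i = 0 := Nat.le_zero.mp hi; subst h0; exact ⟨le_rfl, by omega⟩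
    | succ j ihj =>
      intro hj i hi
      by_cases h : i = j + 1
      · subst h; exact ⟨le_rfl, by omega⟩
      · have h1 : v3 i ≤ v3 j := (ihj (by omega) i (by omega)).1
        have h2 : v3 j + 3 ≤ v3 (j+1) := hstep3 j (by omega)
        exact ⟨by omega, fun _ => by omega⟩
  -- v1 n < v1 (n+1)
  have hsubF : ∀ x, x ≤ v1 n → x ∈ Fset n := by
    rcases n with _ | m
    · intro x hx; rw [v1_zero] at hx; have hx0 : x = 0 := by omega
      subst hx0; exact zero_mem_Fset 0
    · intro x hx
      rcases Nat.lt_or_ge x (v1 (m+1)) with h | h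
      · have : x ∈ Fset m := mem_of_lt_mex (by rw [← v1_succ]; exact h)
        exact Fset_mono this
      · have hxe : x = v1 (m+1) := by omega
        exact mem_Fset.mpr ⟨m+1, le_rfl, Or.inl hxe⟩
  have hva : ∀ j, j ≤ n → v1 j < v1 (n+1) := by
    intro j hj
    have h1 : v1 j ≤ v1 n := hv1mono n le_rfl j hj
    by_contra h
    exact hAnin (hsubF _ (by omega))
  have hvb : ∀ j, j ≤ n → v2 j + 2 ≤ v1 (n+1) + Kx n := by
    intro j hj
    rcases j with _ | i
    · rw [v2_zero]; omega
    · have q := IH i (by omega)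
      have h1 := q.1
      have h4 := q.2.2.2.1
      have hK : Kx (i+1) ≤ Kx n := hKmono n le_rfl (i+1) hj
      have hv : v1 (i+1) < v1 (n+1) := hva (i+1) hj
      omega
  have hv3n_ub : v3 n + 3 ≤ v1 (n+1) + 2 * Kx n := by
    rcases n with _ | m
    · rw [v3_zero]; omega
    · have q := IH m (Nat.lt_succ_self m)
      have h3 := q.2.2.1
      have h7 := q.2.2.2.2.2.2.1
      have hb := hvb (m+1) le_rfl
      omega
  have hMub : v3 n - v1 n + 2 ≤ 2 * Kx n := by
    rcases n with _ | m
    · rw [v3_zero]; omega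
    · have q := IH m (Nat.lt_succ_self m)
      have h1 := q.1
      have h3 := q.2.2.1
      have h4 := q.2.2.2.1
      have h7 := q.2.2.2.2.2.2.1
      have h8 : v1 (m+1) ≤ v3 (m+1) := by omega
      omega
  -- the b computation
  have hEbmem : ∀ m : ℕ,
      m ∈ ((fun d => v1 (n+1) + d) '' Dset n ∪ Set.Icc 1 (v1 (n+1)) ∪ Fset n) ↔
      ((∃ d ∈ Dset n, v1 (n+1) + d = m) ∨ (1 ≤ m ∧ m ≤ v1 (n+1)) ∨ m ∈ Fset n) := by
    intro m
    simp only [Set.mem_union, Set.mem_image, Set.mem_Icc]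
    constructor
    · rintro ((⟨d, hd, he⟩ | h) | h)
      · exact Or.inl ⟨d, hd, he⟩
      · exact Or.inr (Or.inl h)
      · exact Or.inr (Or.inr h)
    · rintro (⟨d, hd, he⟩ | h | h)
      · exact Or.inl (Or.inl ⟨d, hd, he⟩)
      · exact Or.inl (Or.inr h)
      · exact Or.inr h
  have hEbne : ∃ m, m ∉ ((fun d => v1 (n+1) + d) '' Dset n ∪ Set.Icc 1 (v1 (n+1)) ∪ Fset n) := by
    refine ⟨v1 (n+1) + (v3 n - v1 n) + v3 n + 1, ?_⟩
    intro h
    rcases (hEbmem _).mp h with ⟨d, hd, he⟩ | h | h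
    · have := hDub d hd; omega
    · omega
    · have := hFle _ h; omega
  have hBnin : v2 (n+1) ∉ ((fun d => v1 (n+1) + d) '' Dset n ∪ Set.Icc 1 (v1 (n+1)) ∪ Fset n) := by
    rw [v2_succ]; exact mex_notMem hEbne
  have hBge : ∀ m, m < v1 (n+1) + Kx n →
      m ∈ ((fun d => v1 (n+1) + d) '' Dset n ∪ Set.Icc 1 (v1 (n+1)) ∪ Fset n) := by
    intro m hm
    apply (hEbmem m).mpr
    rcases Nat.eq_zero_or_pos m with h0 | h0
    · subst h0; exact Or.inr (Or.inr hF0)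
    rcases Nat.lt_or_ge (v1 (n+1)) m with h1 | h1
    · exact Or.inl ⟨m - v1 (n+1), hKlt _ (by omega), by omega⟩
    · exact Or.inr (Or.inl ⟨h0, h1⟩)
  have hq1 : v1 (n+1) + Kx n ≤ v2 (n+1) := by
    by_contra h
    exact hBnin (hBge _ (by omega))
  have hBcases : (v2 (n+1) ≤ v1 (n+1) + Kx n + 2) ∧
      (∀ m, Kx n < m → m < v2 (n+1) - v1 (n+1) → m ∈ Dset n) := by
    by_cases hcF : v1 (n+1) + Kx n ∈ Fset n
    · obtain ⟨k, hk, hkv⟩ : ∃ k, k ≤ n ∧ v1 (n+1) + Kx n = v3 k := by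
        obtain ⟨j, hj, h⟩ := mem_Fset.mp hcF
        rcases h with h | h | h
        · exfalso; have := hva j hj; omega
        · exfalso; have := hvb j hj; omega
        · exact ⟨j, hj, h⟩
      have hF1 : v1 (n+1) + Kx n + 1 ∉ Fset n := by
        intro hmem
        obtain ⟨i, hi, h⟩ := mem_Fset.mp hmem
        rcases h with h | h | h
        · have := hva i hi; omega
        · have := hvb i hi; omega
        · rcases Nat.lt_or_ge k i with hik | hik
          · have := (hv3mono i hi k (by omega)).2 hik; omega
          · have := (hv3mono k hk i hik).1; omega
      have hF2 : v1 (n+1) + Kx n + 2 ∉ Fset n := by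
        intro hmem
        obtain ⟨i, hi, h⟩ := mem_Fset.mp hmem
        rcases h with h | h | h
        · have := hva i hi; omega
        · have := hvb i hi; omega
        · rcases Nat.lt_or_ge k i with hik | hik
          · have := (hv3mono i hi k (by omega)).2 hik; omega
          · have := (hv3mono k hk i hik).1; omega
      by_cases hK1D : Kx n + 1 ∈ Dset n
      · have hK2D : Kx n + 2 ∉ Dset n := by
          intro h2
          rcases n with _ | m
          · have := Dset_zero hK1D; omega
          · have q9 := (IH m (Nat.lt_succ_self m)).2.2.2.2.2.2.2.2
            have := q9 (Kx (m+1) + 1) hK1D (Kx (m+1) + 2) h2 (by omega) (by omega)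
            omega
        have hnin : v1 (n+1) + Kx n + 2 ∉
            ((fun d => v1 (n+1) + d) '' Dset n ∪ Set.Icc 1 (v1 (n+1)) ∪ Fset n) := by
          intro h
          rcases (hEbmem _).mp h with ⟨d, hd, he⟩ | h | h
          · have : d = Kx n + 2 := by omega
            rw [this] at hd; exact hK2D hd
          · omega
          · exact hF2 h
        have hble : v2 (n+1) ≤ v1 (n+1) + Kx n + 2 := by
          rw [v2_succ]; exact mex_le_of_notMem hnin
        refine ⟨hble, ?_⟩
        intro m hm1 hm2
        have : m = Kx n + 1 := by omega
        rw [this]; exact hK1D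
      · have hnin : v1 (n+1) + Kx n + 1 ∉
            ((fun d => v1 (n+1) + d) '' Dset n ∪ Set.Icc 1 (v1 (n+1)) ∪ Fset n) := by
          intro h
          rcases (hEbmem _).mp h with ⟨d, hd, he⟩ | h | h
          · have : d = Kx n + 1 := by omega
            rw [this] at hd; exact hK1D hd
          · omega
          · exact hF1 h
        have hble : v2 (n+1) ≤ v1 (n+1) + Kx n + 1 := by
          rw [v2_succ]; exact mex_le_of_notMem hnin
        exact ⟨by omega, fun m hm1 hm2 => by omega⟩
    · have hnin : v1 (n+1) + Kx n ∉
          ((fun d => v1 (n+1) + d) '' Dset n ∪ Set.Icc 1 (v1 (n+1)) ∪ Fset n) := by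
        intro h
        rcases (hEbmem _).mp h with ⟨d, hd, he⟩ | h | h
        · have : d = Kx n := by omega
          rw [this] at hd; exact hKnin hd
        · omega
        · exact hcF h
      have hble : v2 (n+1) ≤ v1 (n+1) + Kx n := by
        rw [v2_succ]; exact mex_le_of_notMem hnin
      exact ⟨by omega, fun m hm1 hm2 => by omega⟩
  obtain ⟨hq2, hfill⟩ := hBcases
  -- the c computation
  have hEcmem : ∀ m : ℕ,
      m ∈ ((fun d => v2 (n+1) + d) '' Dset n ∪ Set.Icc 1 (v2 (n+1)) ∪ Fset n) ↔
      ((∃ d ∈ Dset n, v2 (n+1) + d = m) ∨ (1 ≤ m ∧ m ≤ v2 (n+1)) ∨ m ∈ Fset n) := by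
    intro m
    simp only [Set.mem_union, Set.mem_image, Set.mem_Icc]
    constructor
    · rintro ((⟨d, hd, he⟩ | h) | h)
      · exact Or.inl ⟨d, hd, he⟩
      · exact Or.inr (Or.inl h)
      · exact Or.inr (Or.inr h)
    · rintro (⟨d, hd, he⟩ | h | h)
      · exact Or.inl (Or.inl ⟨d, hd, he⟩)
      · exact Or.inl (Or.inr h)
      · exact Or.inr h
  have hEcne : ∃ m, m ∉ ((fun d => v2 (n+1) + d) '' Dset n ∪ Set.Icc 1 (v2 (n+1)) ∪ Fset n) := by
    refine ⟨v2 (n+1) + (v3 n - v1 n) + v3 n + 1, ?_⟩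
    intro h
    rcases (hEcmem _).mp h with ⟨d, hd, he⟩ | h | h
    · have := hDub d hd; omega
    · omega
    · have := hFle _ h; omega
  have hCnin : v3 (n+1) ∉ ((fun d => v2 (n+1) + d) '' Dset n ∪ Set.Icc 1 (v2 (n+1)) ∪ Fset n) := by
    rw [v3_succ]; exact mex_notMem hEcne
  have hCge : ∀ m, m < v2 (n+1) + Kx n →
      m ∈ ((fun d => v2 (n+1) + d) '' Dset n ∪ Set.Icc 1 (v2 (n+1)) ∪ Fset n) := by
    intro m hm
    apply (hEcmem m).mpr
    rcases Nat.eq_zero_or_pos m with h0 | h0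
    · subst h0; exact Or.inr (Or.inr hF0)
    rcases Nat.lt_or_ge (v2 (n+1)) m with h1 | h1
    · exact Or.inl ⟨m - v2 (n+1), hKlt _ (by omega), by omega⟩
    · exact Or.inr (Or.inl ⟨h0, h1⟩)
  have hCgeB : v2 (n+1) + Kx n ≤ v3 (n+1) := by
    by_contra h
    exact hCnin (hCge _ (by omega))
  have hCle : v3 (n+1) ≤ v2 (n+1) + Kx n := by
    rw [v3_succ]
    apply mex_le_of_notMem
    intro h
    rcases (hEcmem _).mp h with ⟨d, hd, he⟩ | h | h
    · have : d = Kx n := by omega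
      rw [this] at hd; exact hKnin hd
    · omega
    · have := hFle _ h; omega
  have hq3 : v3 (n+1) = v2 (n+1) + Kx n := le_antisymm hCle hCgeB
  -- new difference memberships
  have hmemCA : v3 (n+1) - v1 (n+1) ∈ Dset (n+1) :=
    mem_Dset.mpr ⟨n+1, le_rfl, Or.inr (Or.inr rfl)⟩
  have hmemK : Kx n ∈ Dset (n+1) := by
    refine mem_Dset.mpr ⟨n+1, le_rfl, Or.inr (Or.inl ?_)⟩
    omega
  have hmemBA : v2 (n+1) - v1 (n+1) ∈ Dset (n+1) :=
    mem_Dset.mpr ⟨n+1, le_rfl, Or.inl rfl⟩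
  have hDclass : ∀ d ∈ Dset (n+1), d ∈ Dset n ∨ d = v2 (n+1) - v1 (n+1) ∨ d = Kx n ∨
      d = v3 (n+1) - v1 (n+1) := by
    intro d hd
    obtain ⟨j, hj, h⟩ := mem_Dset.mp hd
    by_cases hjn : j ≤ n
    · exact Or.inl (mem_Dset.mpr ⟨j, hjn, h⟩)
    · have hje : j = n + 1 := by omega
      rw [hje] at h
      rcases h with h | h | h
      · exact Or.inr (Or.inl h)
      · exact Or.inr (Or.inr (Or.inl (by omega)))
      · exact Or.inr (Or.inr (Or.inr h))
  have hq5ub : ∀ d ∈ Dset (n+1), d ≤ v3 (n+1) - v1 (n+1) := by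
    intro d hd
    rcases hDclass d hd with h | h | h | h
    · have := hDub d h; omega
    · omega
    · omega
    · omega
  have hq5 : IsGreatest (Dset (n+1)) (v3 (n+1) - v1 (n+1)) := ⟨hmemCA, hq5ub⟩
  have hDne1 : ∃ m, m ∉ Dset (n+1) :=
    ⟨v3 (n+1) - v1 (n+1) + 1, fun h => by have := hq5ub _ h; omega⟩
  have hKnin1 : Kx (n+1) ∉ Dset (n+1) := by rw [Kx_def]; exact mex_notMem hDne1
  have hq7 : Kx n < Kx (n+1) := by
    by_contra h
    rcases Nat.lt_or_ge (Kx (n+1)) (Kx n) with h1 | h1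
    · exact hKnin1 (Dset_mono (hKlt _ h1))
    · have he : Kx (n+1) = Kx n := by omega
      exact hKnin1 (by rw [he]; exact hmemK)
  have hq4 : v2 (n+1) - v1 (n+1) < Kx (n+1) := by
    by_contra h
    apply hKnin1
    rcases Nat.lt_or_ge (Kx (n+1)) (v2 (n+1) - v1 (n+1)) with h1 | h1
    · exact Dset_mono (hfill _ hq7 h1)
    · have he : Kx (n+1) = v2 (n+1) - v1 (n+1) := by omega
      rw [he]; exact hmemBA
  have hq6 : ∀ x ∈ Fset (n+1), x ≤ v3 (n+1) := by
    intro x hx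
    obtain ⟨j, hj, h⟩ := mem_Fset.mp hx
    by_cases hjn : j ≤ n
    · have hxF : x ∈ Fset n := mem_Fset.mpr ⟨j, hjn, h⟩
      have := hFle x hxF
      omega
    · have hje : j = n + 1 := by omega
      rw [hje] at h
      rcases h with h | h | h <;> omega
  have hq8 : v1 n < v1 (n+1) := hva n le_rfl
  have hq9 : ∀ d₁ ∈ Dset (n+1), ∀ d₂ ∈ Dset (n+1), Kx (n+1) < d₁ → d₁ < d₂ → d₁ + 2 ≤ d₂ := by
    intro d₁ h₁ d₂ h₂ hk hlt
    rcases hDclass d₁ h₁ with g₁ | g₁ | g₁ | g₁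
    · rcases hDclass d₂ h₂ with g₂ | g₂ | g₂ | g₂
      · rcases n with _ | m
        · have := Dset_zero g₁; omega
        · exact (IH m (Nat.lt_succ_self m)).2.2.2.2.2.2.2.2 d₁ g₁ d₂ g₂ (by omega) hlt
      · omega
      · omega
      · have := hDub d₁ g₁; omega
    · omega
    · omega
    · rcases hDclass d₂ h₂ with g₂ | g₂ | g₂ | g₂
      · have := hDub d₂ g₂; omega
      · omega
      · omega
      · omega
  exact ⟨hq1, hq2, hq3, hq4, hq5, hq6, hq7, hq8, hq9⟩

theorem stmt6 : ∀ n : ℕ, 1 ≤ n → IsGreatest (Dset n) (v3 n - v1 n) := by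
  intro n hn
  rcases n with _ | m
  · omega
  · exact (Qall m).2.2.2.2.1
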